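/- Let n, d be positive integers, κ ∈ ℝ with −1 < κ < 0, and (y_i, x_i) ∈ ℝ × ℝ^d for i = 1, …, n with y_i ≥ 0 for all i. The generalized PML objective L_κ(θ) = ∑_{i=1}^n ((1/κ)·y_i·exp(κ·θᵀx_i) − (1/(κ+1))·exp((κ+1)·θᵀx_i)) is a concave function of θ on ℝ^d. -/

import Mathlib

open Real RealInnerProductSpace

lemma exp_inner_convex (d : ℕ) (c : ℝ) (x : EuclideanSpace ℝ (Fin d)) :
    ConvexOn ℝ Set.univ (fun θ : EuclideanSpace ℝ (Fin d) => Real.exp (c * ⟪θ, x⟫)) := by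
  have h := convexOn_exp.comp_affineMap
    ((c • (innerSL ℝ x : EuclideanSpace ℝ (Fin d) →L[ℝ] ℝ).toLinearMap).toAffineMap)
  simp only [Set.preimage_univ] at h
  convert h using 2 with θ
  case e'_4 => rfl
  case e'_5 => rfl
  case e'_9 => rfl
  simp [real_inner_comm, mul_comm]

/-- For `-1 < κ < 0` and `y i ≥ 0` for all `i`, the generalized PML objective
`L_κ(θ) = ∑ i, ((1/κ) * y i * exp (κ * ⟪θ, x i⟫) - (1/(κ+1)) * exp ((κ+1) * ⟪θ, x i⟫))`
is concave on `ℝ^d`. -/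
theorem generalized_pml_concave (n d : ℕ) (hn : 0 < n) (hd : 0 < d)
    (κ : ℝ) (hκ1 : -1 < κ) (hκ0 : κ < 0)
    (y : Fin n → ℝ) (hy : ∀ i, 0 ≤ y i) (x : Fin n → EuclideanSpace ℝ (Fin d)) :
    ConcaveOn ℝ Set.univ (fun θ : EuclideanSpace ℝ (Fin d) =>
      ∑ i, ((1 / κ) * y i * Real.exp (κ * ⟪θ, x i⟫)
        - (1 / (κ + 1)) * Real.exp ((κ + 1) * ⟪θ, x i⟫))) := by
  have hterm : ∀ i : Fin n, ConcaveOn ℝ Set.univ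
      (fun θ : EuclideanSpace ℝ (Fin d) =>
        (1 / κ) * y i * Real.exp (κ * ⟪θ, x i⟫)
          - (1 / (κ + 1)) * Real.exp ((κ + 1) * ⟪θ, x i⟫)) := by
    intro i
    have h1 : ConcaveOn ℝ Set.univ
        (fun θ : EuclideanSpace ℝ (Fin d) => (1 / κ) * y i * Real.exp (κ * ⟪θ, x i⟫)) := by
      have hc : 0 ≤ -(1 / κ) * y i := by
        apply mul_nonneg _ (hy i)
        simp only [neg_nonneg]
        exact le_of_lt (div_neg_of_pos_of_neg one_pos hκ0)
      have := ((exp_inner_convex d κ (x i)).smul hc).neg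
      convert this using 1
      case e'_4 => rfl
      case e'_7 => rfl
      case e'_10 => rfl
      ext θ
      simp only [Pi.neg_apply, smul_eq_mul]
      ring
    have h2 : ConcaveOn ℝ Set.univ
        (fun θ : EuclideanSpace ℝ (Fin d) =>
          -((1 / (κ + 1)) * Real.exp ((κ + 1) * ⟪θ, x i⟫))) := by
      have hc : 0 ≤ 1 / (κ + 1) := le_of_lt (div_pos one_pos (by linarith))
      exact ((exp_inner_convex d (κ + 1) (x i)).smul hc).neg
    have := h1.add h2
    convert this using 1
    case e'_10 => rfl
    funext θ
    exact sub_eq_add_neg _ _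
  have hsum : ConcaveOn ℝ Set.univ
      (∑ i : Fin n, fun θ : EuclideanSpace ℝ (Fin d) =>
        (1 / κ) * y i * Real.exp (κ * ⟪θ, x i⟫)
          - (1 / (κ + 1)) * Real.exp ((κ + 1) * ⟪θ, x i⟫)) := by
    apply Finset.sum_induction _ _ (fun f g hf hg => hf.add hg)
      (concaveOn_const 0 convex_univ)
    intro i _
    exact hterm i
  convert hsum using 1
  ext θ
  simp [Finset.sum_apply]
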